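/- If a connected graph G has a shortest path of eccentricity k between vertices s and t, then every path Q containing s and satisfying d(s,t) ≤ max_{v ∈ Q} d(s,v) has eccentricity at most 3k. -/
import Mathlib


open SimpleGraph

variable {V : Type*}

/-- Distance from a vertex `x` to (the support of) a walk `p`. -/
noncomputable def walkDist (G : SimpleGraph V) {u v : V} (x : V) (p : G.Walk u v) : ℕ :=
  sInf {n | ∃ w ∈ p.support, G.dist x w = n}

/-- A walk is a shortest path when its length equals the distance between its ends. -/
noncomputable def IsShortestPath (G : SimpleGraph V) {u v : V} (p : G.Walk u v) : Prop :=
  p.length = G.dist u v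

/-- Eccentricity of a walk: the largest distance from any vertex to the walk. -/
noncomputable def walkEcc [Fintype V] (G : SimpleGraph V) {u v : V} (p : G.Walk u v) : ℕ :=
  sSup {n | ∃ x : V, walkDist G x p = n}

/-- A diameter: a shortest path of maximum length among all distances. -/
noncomputable def IsDiameter [Fintype V] (G : SimpleGraph V) {u v : V} (p : G.Walk u v) : Prop :=
  IsShortestPath G p ∧ ∀ a b : V, G.dist a b ≤ p.length

/-- `k(G)`: minimum eccentricity over all shortest paths. -/
noncomputable def minK [Fintype V] (G : SimpleGraph V) : ℕ :=
  sInf {n | ∃ (u v : V) (p : G.Walk u v), IsShortestPath G p ∧ walkEcc G p = n}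

/-- `l(G)`: minimum eccentricity over all diameters. -/
noncomputable def minL [Fintype V] (G : SimpleGraph V) : ℕ :=
  sInf {n | ∃ (u v : V) (p : G.Walk u v), IsDiameter G p ∧ walkEcc G p = n}

/-- `s(G)`: maximum eccentricity over all diameters. -/
noncomputable def maxS [Fintype V] (G : SimpleGraph V) : ℕ :=
  sSup {n | ∃ (u v : V) (p : G.Walk u v), IsDiameter G p ∧ walkEcc G p = n}


private lemma dist_add_dist_of_mem {G : SimpleGraph V} (hG : G.Connected) {s t : V}
    (P : G.Walk s t) (hP : P.length = G.dist s t) {x : V} (hx : x ∈ P.support) :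
    G.dist s x + G.dist x t = G.dist s t := by
  classical
  have hsplit := P.take_spec hx
  have hlen : (P.takeUntil x hx).length + (P.dropUntil x hx).length = G.dist s t := by
    rw [← Walk.length_append, hsplit, hP]
  have h1 : G.dist s x ≤ (P.takeUntil x hx).length := SimpleGraph.dist_le _
  have h2 : G.dist x t ≤ (P.dropUntil x hx).length := SimpleGraph.dist_le _
  have h3 : G.dist s t ≤ G.dist s x + G.dist x t := hG.dist_triangle
  omega

private lemma dist_pair_le {G : SimpleGraph V} (hG : G.Connected) {s t : V}
    (P : G.Walk s t) (hP : P.length = G.dist s t) {x y : V} (hx : x ∈ P.support)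
    (hy : y ∈ P.support) :
    G.dist x y ≤ (G.dist s y - G.dist s x) + (G.dist s x - G.dist s y) := by
  classical
  have hsplit := P.take_spec hx
  have hy' : y ∈ (P.takeUntil x hx).support ∨ y ∈ (P.dropUntil x hx).support := by
    rw [← hsplit, Walk.support_append, List.mem_append] at hy
    exact hy.imp id List.mem_of_mem_tail
  rcases hy' with hy' | hy'
  · -- y is on the s→x part
    set A := P.takeUntil x hx with hA
    have hsplit2 := A.take_spec hy'
    have hlen : (A.takeUntil y hy').length + (A.dropUntil y hy').length + (P.dropUntil x hx).length
        = G.dist s t := by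
      rw [← Walk.length_append, hsplit2, ← Walk.length_append, hsplit, hP]
    have h1 : G.dist s y ≤ (A.takeUntil y hy').length := SimpleGraph.dist_le _
    have h2 : G.dist y x ≤ (A.dropUntil y hy').length := SimpleGraph.dist_le _
    have h3 : G.dist x t ≤ (P.dropUntil x hx).length := SimpleGraph.dist_le _
    have h4 : G.dist s t ≤ G.dist s y + (G.dist y x + G.dist x t) :=
      le_trans hG.dist_triangle (by gcongr; exact hG.dist_triangle)
    have h5 : G.dist s t ≤ G.dist s x + G.dist x t := hG.dist_triangle
    have h6 : G.dist x y = G.dist y x := G.dist_comm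
    omega
  · -- y is on the x→t part
    set B := P.dropUntil x hx with hB
    have hsplit2 := B.take_spec hy'
    have hlen : (P.takeUntil x hx).length + ((B.takeUntil y hy').length + (B.dropUntil y hy').length)
        = G.dist s t := by
      rw [← Walk.length_append, hsplit2, ← Walk.length_append, hsplit, hP]
    have h1 : G.dist s x ≤ (P.takeUntil x hx).length := SimpleGraph.dist_le _
    have h2 : G.dist x y ≤ (B.takeUntil y hy').length := SimpleGraph.dist_le _
    have h3 : G.dist y t ≤ (B.dropUntil y hy').length := SimpleGraph.dist_le _
    have h4 : G.dist s t ≤ G.dist s x + (G.dist x y + G.dist y t) :=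
      le_trans hG.dist_triangle (by gcongr; exact hG.dist_triangle)
    have h5 : G.dist s t ≤ G.dist s y + G.dist y t := hG.dist_triangle
    omega

private lemma walk_ivt {G : SimpleGraph V} (hG : G.Connected) (s : V) :
    ∀ {c e : V} (R : G.Walk c e) (m : ℕ), G.dist s c ≤ m → m ≤ G.dist s e →
    ∃ q ∈ R.support, G.dist s q = m := by
  intro c e R
  induction R with
  | nil => exact fun m h1 h2 => ⟨_, by simp, le_antisymm h1 h2⟩
  | @cons c c' e h R ih =>
    intro m h1 h2
    rcases eq_or_lt_of_le h1 with heq | hlt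
    · exact ⟨c, by simp, heq⟩
    · have hadj : G.dist c c' ≤ 1 := by
        have := SimpleGraph.dist_le (Walk.cons h Walk.nil)
        simpa using this
      have hle : G.dist s c' ≤ m := by
        have := hG.dist_triangle (v := c) (u := s) (w := c')
        omega
      obtain ⟨q, hq, hqd⟩ := ih m hle h2
      exact ⟨q, by simp [hq], hqd⟩
theorem stmt14 [Fintype V] (G : SimpleGraph V) (hG : G.Connected)
    {s t : V} (P : G.Walk s t) (hP : IsShortestPath G P) (k : ℕ)
    (hecc : ∀ z : V, walkDist G z P ≤ k) :
    ∀ (a b : V) (Q : G.Walk a b), s ∈ Q.support →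
      (∃ w ∈ Q.support, G.dist s t ≤ G.dist s w) →
      walkEcc G Q ≤ 3 * k := by
  classical
  rintro a b Q hsQ ⟨w, hwQ, hwd⟩
  have hP' : P.length = G.dist s t := hP
  -- a walk from s to w inside Q
  obtain ⟨W, hWsub⟩ : ∃ W : G.Walk s w, ∀ q ∈ W.support, q ∈ Q.support := by
    have hwcase : w ∈ (Q.takeUntil s hsQ).support ∨ w ∈ (Q.dropUntil s hsQ).support := by
      have := hwQ
      rw [← Q.take_spec hsQ, Walk.support_append, List.mem_append] at this
      exact this.imp id List.mem_of_mem_tail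
    rcases hwcase with hw' | hw'
    · have hwrev : w ∈ (Q.takeUntil s hsQ).reverse.support := by
        rw [Walk.support_reverse, List.mem_reverse]; exact hw'
      refine ⟨(Q.takeUntil s hsQ).reverse.takeUntil w hwrev, fun q hq => ?_⟩
      have h1 := Walk.support_takeUntil_subset _ hwrev hq
      rw [Walk.support_reverse, List.mem_reverse] at h1
      exact Walk.support_takeUntil_subset _ hsQ h1
    · refine ⟨(Q.dropUntil s hsQ).takeUntil w hw', fun q hq => ?_⟩
      exact Walk.support_dropUntil_subset _ hsQ
        (Walk.support_takeUntil_subset _ hw' hq)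
  apply csSup_le'
  rintro n ⟨z, rfl⟩
  -- p : vertex on P nearest to z
  have hne : {n | ∃ x ∈ P.support, G.dist z x = n}.Nonempty :=
    ⟨_, s, P.start_mem_support, rfl⟩
  obtain ⟨p, hpP, hpz⟩ := Nat.sInf_mem hne
  have hzp : G.dist z p ≤ k := by
    have := hecc z
    unfold walkDist at this
    omega
  set m := G.dist s p with hm
  have hm1 : m ≤ G.dist s t := by
    have := dist_add_dist_of_mem hG P hP' hpP; omega
  have hm2 : m ≤ G.dist s w := le_trans hm1 hwd
  obtain ⟨q, hqW, hqm⟩ := walk_ivt hG s W m (by rw [G.dist_self]; exact Nat.zero_le _) hm2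
  have hqQ := hWsub q hqW
  -- p2 : vertex on P nearest to q
  have hne2 : {n | ∃ x ∈ P.support, G.dist q x = n}.Nonempty :=
    ⟨_, s, P.start_mem_support, rfl⟩
  obtain ⟨p2, hp2P, hp2d⟩ := Nat.sInf_mem hne2
  have hqp2 : G.dist q p2 ≤ k := by
    have := hecc q
    unfold walkDist at this
    omega
  -- |dist s p2 - m| ≤ k
  have hd1 : G.dist s p2 ≤ m + k := by
    have h := hG.dist_triangle (u := s) (v := q) (w := p2)
    omega
  have hd2 : m ≤ G.dist s p2 + k := by
    have h := hG.dist_triangle (u := s) (v := p2) (w := q)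
    have hc : G.dist p2 q = G.dist q p2 := G.dist_comm
    omega
  have hpair := dist_pair_le hG P hP' hpP hp2P
  have hpp2 : G.dist p p2 ≤ 2 * k := by omega
  -- conclude
  have hfin : walkDist G z Q ≤ G.dist z q := Nat.sInf_le ⟨q, hqQ, rfl⟩
  have ht1 : G.dist z q ≤ G.dist z p + G.dist p q := hG.dist_triangle
  have ht2 : G.dist p q ≤ G.dist p p2 + G.dist p2 q := hG.dist_triangle
  have hc2 : G.dist p2 q = G.dist q p2 := G.dist_comm
  omega
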